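/- Let n, N ≥ 1 and let α : Fin N → ℤⁿ be a family of weights which generates ℤⁿ as an additive group (so the corresponding torus representation is faithful), and such that the zero vector of ℝⁿ lies in the intrinsic (relative) interior of the convex hull of {α₁, …, α_N} in ℝⁿ (so the representation is stable). Then the n polynomials μ_j = Σ_{i=1}^{N} α_i(j)·X_i·Y_i, j = 1, …, n, form a regular sequence in the polynomial ring ℂ[X₁, …, X_N, Y₁, …, Y_N]. -/

import Mathlib

open RingTheory.Sequence

/-- Transfer weak regularity along a ring isomorphism. -/
lemma isWeaklyRegular_of_ringEquiv {R S : Type*} [CommRing R] [CommRing S]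
    (e : R ≃+* S) {rs : List R} (h : IsWeaklyRegular R rs) :
    IsWeaklyRegular S (rs.map e) := by
  refine (AddEquiv.isWeaklyRegular_congr (e := e.toAddEquiv) ?_).mp h
  refine List.forall₂_map_right_iff.mpr (List.forall₂_same.mpr fun r _ x => ?_)
  simp [smul_eq_mul]

open RingTheory.Sequence MvPolynomial Pointwise

section Vars
variable {A : Type*} [CommRing A]

variable (A) in
/-- The iso used to kill one variable. -/
noncomputable def killVarEquiv (σ : Type*) [DecidableEq σ] (t : σ) :
    MvPolynomial σ A ≃+* Polynomial (MvPolynomial {s : σ // s ≠ t} A) :=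
  ((renameEquiv A (Equiv.optionSubtypeNe t).symm).trans
      (optionEquivLeft A {s : σ // s ≠ t})).toRingEquiv

variable (A) in
noncomputable def killVar (σ : Type*) [DecidableEq σ] (t : σ) :
    MvPolynomial σ A →+* MvPolynomial {s : σ // s ≠ t} A :=
  (Polynomial.evalRingHom 0).comp (killVarEquiv A σ t)

lemma killVarEquiv_X_self {σ : Type*} [DecidableEq σ] (t : σ) :
    killVarEquiv A σ t (X t) = Polynomial.X := by
  simp [killVarEquiv, Equiv.optionSubtypeNe_symm_self, optionEquivLeft_X_none]

lemma killVar_X_self {σ : Type*} [DecidableEq σ] (t : σ) :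
    killVar A σ t (X t) = 0 := by
  simp [killVar, killVarEquiv_X_self]

lemma killVar_X_ne {σ : Type*} [DecidableEq σ] (t : σ) (s : σ) (h : s ≠ t) :
    killVar A σ t (X s) = X ⟨s, h⟩ := by
  simp [killVar, killVarEquiv, Equiv.optionSubtypeNe_symm_of_ne h, optionEquivLeft_X_some]

lemma killVar_surjective (σ : Type*) [DecidableEq σ] (t : σ) :
    Function.Surjective (killVar A σ t) := by
  intro b
  refine ⟨(killVarEquiv A σ t).symm (Polynomial.C b), ?_⟩
  simp only [killVar, RingHom.comp_apply, RingEquiv.coe_toRingHom,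
    RingEquiv.apply_symm_apply, Polynomial.coe_evalRingHom, Polynomial.eval_C]

lemma ker_killVar (σ : Type*) [DecidableEq σ] (t : σ) :
    RingHom.ker (killVar A σ t) = Ideal.span {X t} := by
  have h1 : RingHom.ker (Polynomial.evalRingHom (0 : MvPolynomial {s : σ // s ≠ t} A)) =
      Ideal.span {Polynomial.X} := by
    rw [Polynomial.ker_evalRingHom]; simp
  have h2 : RingHom.ker (killVar A σ t) =
      Ideal.comap (killVarEquiv A σ t) (Ideal.span {Polynomial.X}) := by
    rw [← h1]; rfl
  rw [h2, ← RingEquiv.symm_symm (killVarEquiv A σ t), Ideal.comap_symm, Ideal.map_span]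
  congr 1
  rw [Set.image_singleton, ← killVarEquiv_X_self (A := A) t, RingEquiv.symm_apply_apply]
end Vars

lemma smul_top_eq_span_singleton {S : Type*} [CommRing S] (r : S) :
    (r • (⊤ : Submodule S S)) = (Ideal.span {r} : Ideal S) := by
  rw [← Submodule.ideal_span_singleton_smul, smul_eq_mul, Ideal.mul_top]

lemma isWeaklyRegular_X_vars {A : Type*} [CommRing A] :
    ∀ (m : ℕ) (σ : Type) [DecidableEq σ] (f : Fin m → σ), Function.Injective f →
      IsWeaklyRegular (MvPolynomial σ A) (List.ofFn fun j => (X (f j) : MvPolynomial σ A))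
  | 0, σ, _, f, _ => by simp [List.ofFn_zero]
  | (m+1), σ, _, f, hf => by
    rw [List.ofFn_succ, RingTheory.Sequence.isWeaklyRegular_cons_iff]
    set t := f 0 with ht
    constructor
    · exact (MvPolynomial.isRegular_X (n := t)).left
    · -- transfer along the iso `QuotSMulTop (X t) S ≃+ MvPolynomial {s // s ≠ t} A`
      have hEq : ((X t : MvPolynomial σ A) • (⊤ : Submodule (MvPolynomial σ A) (MvPolynomial σ A)))
          = RingHom.ker (killVar A σ t) := by
        rw [smul_top_eq_span_singleton, ker_killVar]
      let e1 := Submodule.quotEquivOfEq _ _ hEq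
      let e2 := RingHom.quotientKerEquivOfSurjective (killVar_surjective (A := A) σ t)
      let E : QuotSMulTop (X t : MvPolynomial σ A) (MvPolynomial σ A) ≃+
          MvPolynomial {s : σ // s ≠ t} A := e1.toAddEquiv.trans e2.toAddEquiv
      have hEmk : ∀ y : MvPolynomial σ A,
          E (Submodule.Quotient.mk y) = killVar A σ t y := fun y => rfl
      have key : IsWeaklyRegular (MvPolynomial {s : σ // s ≠ t} A)
          ((List.ofFn fun j => (X (f j.succ) : MvPolynomial σ A)).map (killVar A σ t)) := by
        have hinj : Function.Injective (fun j : Fin m => (⟨f j.succ, fun h => by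
            exact (Fin.succ_ne_zero j) (hf (h.trans ht))⟩ : {s : σ // s ≠ t})) := by
          intro a b hab
          have := hf (congrArg Subtype.val hab)
          exact Fin.succ_injective _ this
        have := isWeaklyRegular_X_vars (A := A) m {s : σ // s ≠ t} (fun j => ⟨f j.succ, fun h =>
          (Fin.succ_ne_zero j) (hf (h.trans ht))⟩) hinj
        convert this using 2
        rw [List.map_ofFn]
        congr 1
        funext j
        exact killVar_X_ne t _ _
      refine (AddEquiv.isWeaklyRegular_congr (e := E) ?_).mpr key
      refine List.forall₂_map_right_iff.mpr (List.forall₂_same.mpr fun r _ x => ?_)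
      obtain ⟨y, rfl⟩ := Submodule.Quotient.mk_surjective _ x
      rw [← Submodule.Quotient.mk_smul, hEmk, hEmk, smul_eq_mul, smul_eq_mul, map_mul]
open RingTheory.Sequence MvPolynomial

section Lin
variable {A : Type*} [CommRing A] {σ : Type*} [Fintype σ] [DecidableEq σ]

noncomputable def linSub (M : Matrix σ σ A) :
    MvPolynomial σ A →ₐ[A] MvPolynomial σ A :=
  aeval (fun i => ∑ k, C (M i k) * X k)

lemma linSub_X (M : Matrix σ σ A) (i : σ) :
    linSub M (X i) = ∑ k, C (M i k) * X k := by simp [linSub]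

lemma linSub_C (M : Matrix σ σ A) (a : A) : linSub M (C a) = C a := by
  simp [linSub, algebraMap_eq]

lemma linSub_comp (M M' : Matrix σ σ A) :
    (linSub M).comp (linSub M') = linSub (M' * M) := by
  refine MvPolynomial.algHom_ext fun i => ?_
  simp only [AlgHom.comp_apply, linSub_X, map_sum, map_mul, linSub_C, Finset.mul_sum]
  rw [Finset.sum_comm]
  refine Finset.sum_congr rfl fun k _ => ?_
  rw [Matrix.mul_apply, map_sum, Finset.sum_mul]
  refine Finset.sum_congr rfl fun x _ => ?_
  rw [map_mul]; ring

lemma linSub_one : linSub (1 : Matrix σ σ A) = AlgHom.id A (MvPolynomial σ A) := by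
  refine MvPolynomial.algHom_ext fun i => ?_
  have h : ∀ k : σ, C ((1 : Matrix σ σ A) i k) * X k = if i = k then X k else (0 : MvPolynomial σ A) :=
    fun k => by rw [Matrix.one_apply]; split <;> simp
  simp only [AlgHom.coe_id, id_eq, linSub_X, h, Finset.sum_ite_eq, Finset.mem_univ, if_true]

noncomputable def linSubEquiv (M M' : Matrix σ σ A) (h1 : M * M' = 1) (h2 : M' * M = 1) :
    MvPolynomial σ A ≃ₐ[A] MvPolynomial σ A :=
  AlgEquiv.ofAlgHom (linSub M) (linSub M')
    (by rw [linSub_comp, h2, linSub_one]) (by rw [linSub_comp, h1, linSub_one])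
end Lin
section LinForms
open Module

lemma isWeaklyRegular_linear_forms {n N : ℕ} (v : Fin n → (Fin N → ℂ))
    (hv : LinearIndependent ℂ v) :
    IsWeaklyRegular (MvPolynomial (Fin N) ℂ)
      (List.ofFn fun j => ∑ i, C (v j i) * X i) := by
  have hnN : n ≤ N := by
    have := hv.fintype_card_le_finrank
    simpa using this
  rcases Nat.eq_zero_or_pos N with hN0 | hNpos
  · have hn0 : n = 0 := by omega
    subst hn0
    simpa using IsWeaklyRegular.nil (MvPolynomial (Fin N) ℂ) (MvPolynomial (Fin N) ℂ)
  set W : Submodule ℂ (Fin N → ℂ) := Submodule.span ℂ (Set.range v) with hW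
  obtain ⟨W', hWc⟩ := Submodule.exists_isCompl W
  have h2 : finrank ℂ W = n := by rw [hW, finrank_span_eq_card hv]; simp
  have h1 : finrank ℂ W + finrank ℂ W' = N := by
    have := Submodule.finrank_add_eq_of_isCompl hWc
    simpa using this
  have hrank : finrank ℂ W' = N - n := by omega
  let cw := (Module.finBasis ℂ W').reindex (finCongr hrank)
  let u : Fin n ⊕ Fin (N - n) → (Fin N → ℂ) := Sum.elim v (fun j => (cw j : Fin N → ℂ))
  have hspan : Submodule.span ℂ (Set.range fun j => (cw j : Fin N → ℂ)) = W' := by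
    have h : (fun j => (cw j : Fin N → ℂ)) = (W'.subtype : W' →ₗ[ℂ] (Fin N → ℂ)) ∘ cw := rfl
    rw [h, Set.range_comp, Submodule.span_image, cw.span_eq, Submodule.map_subtype_top]
  have hcwli : LinearIndependent ℂ (fun j => (cw j : Fin N → ℂ)) := by
    have h : (fun j => (cw j : Fin N → ℂ)) = (W'.subtype : W' →ₗ[ℂ] (Fin N → ℂ)) ∘ cw := rfl
    rw [h]
    exact cw.linearIndependent.map' W'.subtype (Submodule.ker_subtype W')
  have hu : LinearIndependent ℂ u := by
    refine LinearIndependent.sum_type hv hcwli ?_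
    rw [hspan, ← hW]
    exact hWc.disjoint
  have hnonempty : Nonempty (Fin n ⊕ Fin (N - n)) := by
    rcases Nat.eq_zero_or_pos n with h | h
    · exact ⟨Sum.inr ⟨0, by omega⟩⟩
    · exact ⟨Sum.inl ⟨0, by omega⟩⟩
  have hcard : Fintype.card (Fin n ⊕ Fin (N - n)) = finrank ℂ (Fin N → ℂ) := by
    simp; omega
  let bN0 := basisOfLinearIndependentOfCardEqFinrank hu hcard
  have hbN0 : ⇑bN0 = u := coe_basisOfLinearIndependentOfCardEqFinrank hu hcard
  let eIdx : (Fin n ⊕ Fin (N - n)) ≃ Fin N := finSumFinEquiv.trans (finCongr (by omega))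
  let bN := bN0.reindex eIdx
  let M : Matrix (Fin N) (Fin N) ℂ := Matrix.of fun k i => bN k i
  let P := (Pi.basisFun ℂ (Fin N)).toMatrix bN
  let Q := bN.toMatrix (Pi.basisFun ℂ (Fin N))
  have hP : P = M.transpose := by
    ext i j
    simp only [P, Basis.toMatrix_apply, Pi.basisFun_repr, Matrix.transpose_apply, M, Matrix.of_apply]
  have hPQ : P * Q = 1 := Basis.toMatrix_mul_toMatrix_flip _ _
  have hQP : Q * P = 1 := Basis.toMatrix_mul_toMatrix_flip _ _
  have hMM' : M * Q.transpose = 1 := by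
    have := congrArg Matrix.transpose hQP
    rwa [Matrix.transpose_mul, hP, Matrix.transpose_transpose, Matrix.transpose_one] at this
  have hM'M : Q.transpose * M = 1 := by
    have := congrArg Matrix.transpose hPQ
    rwa [Matrix.transpose_mul, hP, Matrix.transpose_transpose, Matrix.transpose_one] at this
  let ψ := linSubEquiv M Q.transpose hMM' hM'M
  let emb : Fin n → Fin N := fun j => eIdx (Sum.inl j)
  have hembinj : Function.Injective emb := by
    intro a b hab
    have := eIdx.injective hab
    simpa using this
  have base := isWeaklyRegular_X_vars (A := ℂ) n (Fin N) emb hembinj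
  have main := isWeaklyRegular_of_ringEquiv ψ.toRingEquiv base
  have hlist : (List.ofFn fun j => (X (emb j) : MvPolynomial (Fin N) ℂ)).map ψ.toRingEquiv
      = List.ofFn fun j => ∑ i, C (v j i) * X i := by
    rw [List.map_ofFn]
    congr 1
    funext j
    show ψ (X (emb j)) = _
    have : ψ (X (emb j)) = linSub M (X (emb j)) := rfl
    rw [this, linSub_X]
    refine Finset.sum_congr rfl fun k _ => ?_
    have hM : M (emb j) k = v j k := by
      simp only [M, Matrix.of_apply, bN, Basis.reindex_apply, hbN0]
      rw [show eIdx.symm (emb j) = Sum.inl j from eIdx.symm_apply_apply _]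
      rfl
    rw [hM]
  rwa [hlist] at main
end LinForms
open MvPolynomial

namespace TorusAux

variable (N : ℕ)

/-- The moment-map algebra morphism `ℂ[z] → ℂ[x,y]`, `z i ↦ x i * y i`. -/
noncomputable def phi : MvPolynomial (Fin N) ℂ →ₐ[ℂ] MvPolynomial (Fin N ⊕ Fin N) ℂ :=
  aeval (fun i => X (Sum.inl i) * X (Sum.inr i))

noncomputable instance mmAlgebra :
    Algebra (MvPolynomial (Fin N) ℂ) (MvPolynomial (Fin N ⊕ Fin N) ℂ) :=
  (phi N).toRingHom.toAlgebra

lemma algebraMap_eq_phi :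
    algebraMap (MvPolynomial (Fin N) ℂ) (MvPolynomial (Fin N ⊕ Fin N) ℂ) = (phi N).toRingHom :=
  rfl

/-- Splitting of exponents on `Fin N ⊕ Fin N`. -/
noncomputable def pr : ((Fin N ⊕ Fin N) →₀ ℕ) ≃+ ((Fin N →₀ ℕ) × (Fin N →₀ ℕ)) :=
  Finsupp.sumFinsuppAddEquivProdFinsupp

lemma pr_symm_apply (p : (Fin N →₀ ℕ) × (Fin N →₀ ℕ)) (s : Fin N ⊕ Fin N) :
    (pr N).symm p s = Sum.elim p.1 p.2 s := by
  obtain ⟨u, rfl⟩ := (pr N).surjective p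
  rw [AddEquiv.symm_apply_apply]
  cases s with
  | inl a => exact (Finsupp.fst_sumFinsuppAddEquivProdFinsupp u a).symm
  | inr a => exact (Finsupp.snd_sumFinsuppAddEquivProdFinsupp u a).symm

/-- index type for the basis of `ℂ[x,y]` over `ℂ[z]`: pairs of exponents with
disjoint supports. -/
def BIdx : Type := {p : (Fin N →₀ ℕ) × (Fin N →₀ ℕ) // ∀ i, p.1 i = 0 ∨ p.2 i = 0}

/-- The monomial bijection `(a,b,c) ↦ (a+c, b+c)`. -/
noncomputable def expEquiv : BIdx N × (Fin N →₀ ℕ) ≃ ((Fin N ⊕ Fin N) →₀ ℕ) where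
  toFun x := (pr N).symm (x.1.1.1 + x.2, x.1.1.2 + x.2)
  invFun u :=
    ⟨⟨⟨(pr N u).1 - Finsupp.zipWith min (min_self 0) (pr N u).1 (pr N u).2,
       (pr N u).2 - Finsupp.zipWith min (min_self 0) (pr N u).1 (pr N u).2⟩,
      fun i => by simp only [Finsupp.tsub_apply, Finsupp.zipWith_apply]; omega⟩,
     Finsupp.zipWith min (min_self 0) (pr N u).1 (pr N u).2⟩
  left_inv := by
    rintro ⟨⟨⟨a, b⟩, hab⟩, c⟩
    have h : pr N ((pr N).symm (a + c, b + c)) = (a + c, b + c) := (pr N).apply_symm_apply _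
    have hmin : Finsupp.zipWith min (min_self 0) (a + c) (b + c) = c := by
      ext i
      simp only [Finsupp.zipWith_apply, Finsupp.add_apply]
      rcases hab i with h | h
      · rw [h, zero_add]
        exact min_eq_left (Nat.le_add_left _ _)
      · rw [h, zero_add]
        exact min_eq_right (Nat.le_add_left _ _)
    refine Prod.ext (Subtype.ext (Prod.ext ?_ ?_)) ?_ <;>
      simp only [h, hmin] <;> ext i <;> simp only [Finsupp.tsub_apply, Finsupp.add_apply] <;> omega
  right_inv := by
    intro u
    apply (pr N).injective
    rw [(pr N).apply_symm_apply]
    refine Prod.ext ?_ ?_ <;> ext i <;>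
      simp only [Finsupp.add_apply, Finsupp.tsub_apply, Finsupp.zipWith_apply] <;>
      rcases le_total ((pr N u).1 i) ((pr N u).2 i) with h | h <;>
      first
      | (rw [min_eq_left h]; omega)
      | (rw [min_eq_right h]; omega)

lemma expEquiv_apply (p : BIdx N) (c : Fin N →₀ ℕ) :
    expEquiv N (p, c) = (pr N).symm (p.1.1 + c, p.1.2 + c) := rfl

/-- The candidate basis family. -/
noncomputable def mon (p : BIdx N) : MvPolynomial (Fin N ⊕ Fin N) ℂ :=
  monomial ((pr N).symm (p.1.1, p.1.2)) 1

/-- diagonal exponent map -/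
noncomputable def dg (c : Fin N →₀ ℕ) : (Fin N ⊕ Fin N) →₀ ℕ := (pr N).symm (c, c)

lemma dg_add (c c' : Fin N →₀ ℕ) : dg N (c + c') = dg N c + dg N c' := by
  unfold dg
  rw [← map_add]
  rfl

lemma dg_single (a : Fin N) (b : ℕ) :
    dg N (Finsupp.single a b)
      = Finsupp.single (Sum.inl a) b + Finsupp.single (Sum.inr a) b := by
  unfold dg
  apply (pr N).injective
  rw [AddEquiv.apply_symm_apply, map_add]
  refine Prod.ext ?_ ?_ <;> ext i <;>
    simp [pr, Finsupp.fst_sumFinsuppAddEquivProdFinsupp, Finsupp.snd_sumFinsuppAddEquivProdFinsupp,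
      Finsupp.single_apply]

lemma phi_monomial (c : Fin N →₀ ℕ) :
    phi N (monomial c 1) = monomial (dg N c) 1 := by
  induction c using Finsupp.induction with
  | zero =>
    have : dg N 0 = 0 := by unfold dg; simpa using map_zero (pr N).symm
    simp [this, monomial_zero', map_one]
  | single_add a b f ha hb ih =>
    have hsplit : (monomial (Finsupp.single a b + f) (1 : ℂ) : MvPolynomial (Fin N) ℂ)
        = monomial (Finsupp.single a b) 1 * monomial f 1 := by
      rw [monomial_mul, one_mul]
    have hss : phi N (monomial (Finsupp.single a b) (1 : ℂ)) = monomial (dg N (Finsupp.single a b)) 1 := by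
      rw [← X_pow_eq_monomial, map_pow]
      have hX : phi N (X a) = X (Sum.inl a) * X (Sum.inr a) := by simp [phi]
      rw [hX, mul_pow, X_pow_eq_monomial, X_pow_eq_monomial, monomial_mul, one_mul, dg_single]
    rw [hsplit, map_mul, ih, hss, dg_add, monomial_mul, one_mul]

end TorusAux

namespace TorusAux

variable (N : ℕ)

instance : IsScalarTower ℂ (MvPolynomial (Fin N) ℂ) (MvPolynomial (Fin N ⊕ Fin N) ℂ) :=
  IsScalarTower.of_algebraMap_eq fun c => by
    rw [algebraMap_eq_phi]
    simp [phi, MvPolynomial.algebraMap_eq]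

/-- The structural `S`-linear map from a free module onto `R`. -/
noncomputable def Phi : (BIdx N →₀ MvPolynomial (Fin N) ℂ)
    →ₗ[MvPolynomial (Fin N) ℂ] MvPolynomial (Fin N ⊕ Fin N) ℂ :=
  Finsupp.linearCombination _ (mon N)

noncomputable def Dbasis : Module.Basis (Σ _ : BIdx N, (Fin N →₀ ℕ)) ℂ
    (BIdx N →₀ MvPolynomial (Fin N) ℂ) :=
  Finsupp.basis (fun _ => basisMonomials (Fin N) ℂ)

noncomputable def Esig : (Σ _ : BIdx N, (Fin N →₀ ℕ)) ≃ ((Fin N ⊕ Fin N) →₀ ℕ) :=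
  (Equiv.sigmaEquivProd (BIdx N) (Fin N →₀ ℕ)).trans (expEquiv N)

lemma Phi_eq : LinearMap.restrictScalars ℂ (Phi N)
    = ((Dbasis N).equiv (basisMonomials (Fin N ⊕ Fin N) ℂ) (Esig N)).toLinearMap := by
  apply (Dbasis N).ext
  rintro ⟨p, c⟩
  have hD : (Dbasis N) ⟨p, c⟩ = Finsupp.single p (monomial c 1) := by
    rw [show (Dbasis N) ⟨p, c⟩
      = Finsupp.single p ((basisMonomials (Fin N) ℂ) c) from congrFun (Finsupp.coe_basis _) _]
    rw [coe_basisMonomials]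
  have hR : ((Dbasis N).equiv (basisMonomials (Fin N ⊕ Fin N) ℂ) (Esig N)).toLinearMap
      ((Dbasis N) ⟨p, c⟩) = monomial (expEquiv N (p, c)) 1 := by
    show ((Dbasis N).equiv (basisMonomials (Fin N ⊕ Fin N) ℂ) (Esig N)) ((Dbasis N) ⟨p, c⟩) = _
    rw [Module.Basis.equiv_apply]
    rw [show (basisMonomials (Fin N ⊕ Fin N) ℂ) (Esig N ⟨p, c⟩)
      = monomial (Esig N ⟨p, c⟩) 1 from congrFun (coe_basisMonomials _ _) _]
    rfl
  have hL : (Phi N) (Finsupp.single p (monomial c 1)) = monomial (expEquiv N (p, c)) 1 := by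
    rw [Phi, Finsupp.linearCombination_single, Algebra.smul_def, algebraMap_eq_phi]
    show phi N (monomial c 1) * mon N p = _
    rw [phi_monomial]
    rw [show mon N p = monomial ((pr N).symm (p.1.1, p.1.2)) 1 from rfl]
    rw [monomial_mul, one_mul, expEquiv_apply]
    congr 1
    rw [show dg N c = (pr N).symm (c, c) from rfl, ← map_add, Prod.mk_add_mk]
    rw [add_comm c, add_comm c]
  rw [LinearMap.restrictScalars_apply, hD, hL, ← hD]
  exact hR.symm

lemma Phi_bijective : Function.Bijective (Phi N) := by
  have h : ⇑(Phi N) = ⇑((Dbasis N).equiv (basisMonomials (Fin N ⊕ Fin N) ℂ) (Esig N)) := by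
    rw [← LinearMap.coe_restrictScalars ℂ (Phi N), Phi_eq]
    rfl
  rw [h]
  exact ((Dbasis N).equiv (basisMonomials (Fin N ⊕ Fin N) ℂ) (Esig N)).bijective

/-- `ℂ[x,y]` is a free module over `ℂ[z]` via `z i ↦ x i y i`. -/
noncomputable def mmEquiv : (BIdx N →₀ MvPolynomial (Fin N) ℂ)
    ≃ₗ[MvPolynomial (Fin N) ℂ] MvPolynomial (Fin N ⊕ Fin N) ℂ :=
  LinearEquiv.ofBijective (Phi N) (Phi_bijective N)

instance : Module.Free (MvPolynomial (Fin N) ℂ) (MvPolynomial (Fin N ⊕ Fin N) ℂ) :=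
  Module.Free.of_equiv (mmEquiv N)

end TorusAux

open TorusAux RingTheory.Sequence TensorProduct in
/-- Theorem 3.2 combined with Lemma 2.1(2)/Theorem 2.2(2): for a faithful
stable torus module (weights `α` generate `ℤⁿ` and `0` lies in the relative
interior of the convex hull of the weights), the components
`μ_j = Σ_i α_i(j)·X_i·Y_i` of the complexified moment map form a regular
sequence in `ℂ[X₁,…,X_N,Y₁,…,Y_N]`. -/
theorem torus_moment_components_isRegular
    (n N : ℕ) (hn : 1 ≤ n) (hN : 1 ≤ N)
    (α : Fin N → (Fin n → ℤ))
    (hfaithful : AddSubgroup.closure (Set.range α) = (⊤ : AddSubgroup (Fin n → ℤ)))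
    (hstable : (0 : EuclideanSpace ℝ (Fin n)) ∈
      intrinsicInterior ℝ (convexHull ℝ
        (Set.range fun i => (WithLp.toLp 2 (fun j => (α i j : ℝ)) : EuclideanSpace ℝ (Fin n))))) :
    RingTheory.Sequence.IsRegular (MvPolynomial (Fin N ⊕ Fin N) ℂ)
      (List.ofFn fun j : Fin n =>
        (∑ i : Fin N, C (α i j : ℂ) * X (Sum.inl i) * X (Sum.inr i) :
          MvPolynomial (Fin N ⊕ Fin N) ℂ)) := by
  classical
  set v : Fin n → (Fin N → ℂ) := fun j i => (α i j : ℂ) with hvdef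
  -- linear independence of the rows of the weight matrix, from faithfulness
  have hv : LinearIndependent ℂ v := by
    rw [Fintype.linearIndependent_iff]
    intro g hg j
    have key : ∀ w ∈ AddSubgroup.closure (Set.range α),
        ∑ j' : Fin n, g j' * ((w j' : ℤ) : ℂ) = 0 := by
      intro w hw
      induction hw using AddSubgroup.closure_induction with
      | mem x hx =>
        obtain ⟨i, rfl⟩ := hx
        have := congrFun hg i
        simpa [v, Finset.sum_apply] using this
      | zero => simp
      | add x y _ _ hx hy =>
        simp only [show ∀ j' : Fin n, (x + y) j' = x j' + y j' from fun _ => rfl,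
          Int.cast_add, mul_add, Finset.sum_add_distrib, hx, hy, add_zero]
      | neg x _ hx =>
        simp only [show ∀ j' : Fin n, (-x) j' = -(x j') from fun _ => rfl,
          Int.cast_neg, mul_neg, Finset.sum_neg_distrib, hx, neg_zero]
    have h1 : ∑ j' : Fin n, g j' * (((Pi.single j 1 : Fin n → ℤ) j' : ℤ) : ℂ) = 0 :=
      key _ (by rw [hfaithful]; trivial)
    have h2 : ∑ j' : Fin n, g j' * (((Pi.single j 1 : Fin n → ℤ) j' : ℤ) : ℂ) = g j := by
      rw [Finset.sum_eq_single j]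
      · simp
      · intro b _ hb
        simp [Pi.single_apply, hb]
      · intro h; exact absurd (Finset.mem_univ j) h
    rw [h2] at h1
    exact h1
  have hw : IsWeaklyRegular (MvPolynomial (Fin N) ℂ)
      (List.ofFn fun j => ∑ i, C (v j i) * X i) := isWeaklyRegular_linear_forms v hv
  have h2 : IsWeaklyRegular
      ((MvPolynomial (Fin N ⊕ Fin N) ℂ) ⊗[MvPolynomial (Fin N) ℂ] (MvPolynomial (Fin N) ℂ))
      (List.ofFn fun j => ∑ i, C (v j i) * X i) :=
    hw.isWeaklyRegular_lTensor
  have h3 : IsWeaklyRegular (MvPolynomial (Fin N ⊕ Fin N) ℂ)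
      (List.ofFn fun j => ∑ i, C (v j i) * X i) :=
    ((TensorProduct.rid (MvPolynomial (Fin N) ℂ)
      (MvPolynomial (Fin N ⊕ Fin N) ℂ)).isWeaklyRegular_congr _).mp h2
  have h4 : IsWeaklyRegular (MvPolynomial (Fin N ⊕ Fin N) ℂ)
      ((List.ofFn fun j => ∑ i, C (v j i) * X i).map
        (algebraMap (MvPolynomial (Fin N) ℂ) (MvPolynomial (Fin N ⊕ Fin N) ℂ))) :=
    (isWeaklyRegular_map_algebraMap_iff _ _ _).mpr h3
  have hlist : (List.ofFn fun j => ∑ i, C (v j i) * X i).map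
      (algebraMap (MvPolynomial (Fin N) ℂ) (MvPolynomial (Fin N ⊕ Fin N) ℂ))
      = List.ofFn fun j : Fin n =>
        (∑ i : Fin N, C (α i j : ℂ) * X (Sum.inl i) * X (Sum.inr i) :
          MvPolynomial (Fin N ⊕ Fin N) ℂ) := by
    rw [List.map_ofFn]
    congr 1
    funext j
    show phi N (∑ i, C (v j i) * X i) = _
    rw [map_sum]
    refine Finset.sum_congr rfl fun i _ => ?_
    rw [map_mul]
    have hC : phi N (C (v j i)) = C (v j i) := by
      simp [phi, MvPolynomial.algebraMap_eq]
    have hX : phi N (X i) = X (Sum.inl i) * X (Sum.inr i) := by simp [phi]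
    rw [hC, hX, hvdef, ← mul_assoc]
  rw [hlist] at h4
  refine ⟨h4, ?_⟩
  intro htop
  rw [smul_eq_mul, Ideal.mul_top] at htop
  have hone : (1 : MvPolynomial (Fin N ⊕ Fin N) ℂ) ∈ Ideal.ofList
      (List.ofFn fun j : Fin n =>
        (∑ i : Fin N, C (α i j : ℂ) * X (Sum.inl i) * X (Sum.inr i) :
          MvPolynomial (Fin N ⊕ Fin N) ℂ)) := by
    rw [← Ideal.eq_top_iff_one, ← htop]
  have hker : Ideal.ofList
      (List.ofFn fun j : Fin n =>
        (∑ i : Fin N, C (α i j : ℂ) * X (Sum.inl i) * X (Sum.inr i) :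
          MvPolynomial (Fin N ⊕ Fin N) ℂ))
      ≤ RingHom.ker (constantCoeff (R := ℂ) (σ := Fin N ⊕ Fin N)) := by
    rw [Ideal.span_le]
    rintro x hx
    simp only [Set.mem_setOf_eq, List.mem_ofFn] at hx
    obtain ⟨j, rfl⟩ := hx
    simp [RingHom.mem_ker, map_sum]
  have := hker hone
  rw [RingHom.mem_ker, map_one] at this
  exact one_ne_zero this
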